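/- For all t > 0, the function φ(t) = 1 + t·ln(t/(1+t)) satisfies φ(t) ≥ (1 - ln 2) · min{1, 1/t}. -/

import Mathlib

open Real Set

private lemma L_lb {x : ℝ} (hx : 0 < x) : 1/(1+x) < Real.log (1+x) - Real.log x := by
  have h1x : (0:ℝ) < 1 + x := by linarith
  have hy : (0:ℝ) < x/(1+x) := by positivity
  have hne : x/(1+x) ≠ 1 := by
    intro h
    have := (div_eq_one_iff_eq (by positivity)).1 h
    linarith
  have := Real.log_lt_sub_one_of_pos hy hne
  rw [Real.log_div (ne_of_gt hx) (ne_of_gt h1x)] at this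
  have : Real.log x - Real.log (1+x) < x/(1+x) - 1 := this
  have hfs : x/(1+x) - 1 = -(1/(1+x)) := by field_simp; ring
  linarith [hfs ▸ this]

private lemma gderiv {x : ℝ} (hx : 0 < x) :
    HasDerivAt (fun t : ℝ => t * (Real.log (1+t) - Real.log t))
      (Real.log (1+x) - Real.log x + x * (1/(1+x) - 1/x)) x := by
  have h1x : (0:ℝ) < 1 + x := by linarith
  have hlog1 : HasDerivAt (fun t : ℝ => Real.log (1+t)) (1/(1+x)) x := by
    have h := (Real.hasDerivAt_log (ne_of_gt h1x)).comp x
      ((hasDerivAt_const x (1:ℝ)).add (hasDerivAt_id x))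
    simpa [one_div, Function.comp_def] using h
  have hlog2 : HasDerivAt Real.log (1/x) x := by
    simpa [one_div] using Real.hasDerivAt_log (ne_of_gt hx)
  have := (hasDerivAt_id x).mul (hlog1.sub hlog2)
  refine this.congr_deriv ?_; simp

private lemma g_mono : StrictMonoOn (fun t : ℝ => t * (Real.log (1+t) - Real.log t)) (Ioi 0) := by
  apply strictMonoOn_of_deriv_pos (convex_Ioi 0)
  · intro x hx
    exact (gderiv hx).continuousAt.continuousWithinAt
  · intro x hx
    rw [interior_Ioi] at hx
    have hx : (0:ℝ) < x := hx
    rw [(gderiv hx).deriv]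
    have h1x : (0:ℝ) < 1 + x := by linarith
    have hL := L_lb hx
    have : x * (1/(1+x) - 1/x) = x/(1+x) - 1 := by field_simp
    rw [this]
    have : x/(1+x) - 1 = -(1/(1+x)) := by field_simp; ring
    rw [this]
    linarith

private lemma hderiv {x : ℝ} (hx : 0 < x) :
    HasDerivAt (fun t : ℝ => t - t^2 * (Real.log (1+t) - Real.log t))
      (1 - (2*x * (Real.log (1+x) - Real.log x) + x^2 * (1/(1+x) - 1/x))) x := by
  have h1x : (0:ℝ) < 1 + x := by linarith
  have hlog1 : HasDerivAt (fun t : ℝ => Real.log (1+t)) (1/(1+x)) x := by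
    have h := (Real.hasDerivAt_log (ne_of_gt h1x)).comp x
      ((hasDerivAt_const x (1:ℝ)).add (hasDerivAt_id x))
    simpa [one_div, Function.comp_def] using h
  have hlog2 : HasDerivAt Real.log (1/x) x := by
    simpa [one_div] using Real.hasDerivAt_log (ne_of_gt hx)
  have hsq : HasDerivAt (fun t : ℝ => t^2) (2*x) x := by
    simpa using hasDerivAt_pow 2 x
  have := (hasDerivAt_id x).sub (hsq.mul (hlog1.sub hlog2))
  refine this.congr_deriv ?_; simp

private lemma L_ub {x : ℝ} (hx : 1 ≤ x) :
    2*x * (Real.log (1+x) - Real.log x) < 1 + x/(1+x) := by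
  have hx0 : (0:ℝ) < x := by linarith
  have h1x : (0:ℝ) < 1 + x := by linarith
  set u : ℝ := (1+x)/x with hu
  have hu1 : 1 < u := by
    rw [hu, lt_div_iff₀ hx0]; linarith
  have hu0 : 0 < u := by linarith
  have hlogu : 0 < Real.log u := Real.log_pos hu1
  have hs : Real.log u < Real.sinh (Real.log u) := Real.self_lt_sinh_iff.2 hlogu
  rw [Real.sinh_log hu0] at hs
  have hLu : Real.log (1+x) - Real.log x = Real.log u := by
    rw [hu, Real.log_div (ne_of_gt h1x) (ne_of_gt hx0)]
  rw [hLu]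
  have key : 2*x * ((u - u⁻¹)/2) = 1 + x/(1+x) := by
    rw [hu]
    field_simp
    ring
  nlinarith [hs, hx0]

private lemma h_mono : StrictMonoOn (fun t : ℝ => t - t^2 * (Real.log (1+t) - Real.log t)) (Ici 1) := by
  apply strictMonoOn_of_deriv_pos (convex_Ici 1)
  · intro x hx
    have hx0 : (0:ℝ) < x := lt_of_lt_of_le one_pos hx
    exact (hderiv hx0).continuousAt.continuousWithinAt
  · intro x hx
    rw [interior_Ici] at hx
    have hx1 : (1:ℝ) < x := hx
    have hx0 : (0:ℝ) < x := by linarith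
    have h1x : (0:ℝ) < 1 + x := by linarith
    rw [(hderiv hx0).deriv]
    have hub := L_ub (le_of_lt hx1)
    have hsq : x^2 * (1/(1+x) - 1/x) = -(x/(1+x)) := by field_simp; ring
    rw [hsq]
    linarith

theorem phi_min_bound (t : ℝ) (ht : 0 < t) :
    (1 - Real.log 2) * min 1 (1 / t) ≤ 1 + t * Real.log (t / (1 + t)) := by
  have h1t : (0:ℝ) < 1 + t := by linarith
  have hlog : Real.log (t / (1+t)) = -(Real.log (1+t) - Real.log t) := by
    rw [Real.log_div (ne_of_gt ht) (ne_of_gt h1t)]; ring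
  have hln2 : Real.log 2 < 1 := by
    have := Real.log_two_lt_d9; linarith
  rcases le_total t 1 with h | h
  · have hmin : min 1 (1/t) = 1 := by
      apply min_eq_left
      rw [le_div_iff₀ ht]; linarith
    rw [hmin, mul_one, hlog]
    have hg : t * (Real.log (1+t) - Real.log t) ≤ 1 * (Real.log (1+1) - Real.log 1) :=
      g_mono.monotoneOn (mem_Ioi.2 ht) (mem_Ioi.2 one_pos) h
    simp only [Real.log_one, one_mul, sub_zero] at hg
    norm_num at hg
    linarith
  · have hmin : min 1 (1/t) = 1/t := by
      apply min_eq_right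
      rw [div_le_one ht]; linarith
    rw [hmin, hlog]
    have hh : 1 - 1^2 * (Real.log (1+1) - Real.log 1) ≤ t - t^2 * (Real.log (1+t) - Real.log t) :=
      h_mono.monotoneOn (mem_Ici.2 (le_refl 1)) (mem_Ici.2 h) h
    simp only [Real.log_one, one_pow, one_mul, sub_zero] at hh
    norm_num at hh
    rw [mul_one_div, div_le_iff₀ ht]
    nlinarith [hh]
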